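/- Let P be a probability measure, α ∈ (0,1), Z a sub-σ-algebra, μ₀ integrable and G-measurable for some σ-algebra G ⊇ Z, and η₀ a Z-measurable version of the conditional α-quantile of μ₀ given Z with P(μ₀ = η₀) = 0 and P(μ₀ > η₀ | Z) = 1−α a.e. Then sup over G-measurable h : Ω → [0,1] with E_P[h | Z] = 1−α a.e. of (1/(1−α))·E_P[h·μ₀] is attained by h₀ = 1[μ₀ > η₀], and equals E_P[(1/(1−α))·(μ₀ − η₀)₊ + η₀]. -/

import Mathlib

open MeasureTheory ENNReal Set

/-- Conditional (Z-constrained) strong duality: the worst `(1−α)`-subsample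
subject to preserving the distribution of `Z` is obtained by thresholding the
conditional expected loss `μ₀` at its conditional `α`-quantile `η₀`, and the
worst-case risk admits the dual representation. -/
theorem stmt_17 {Ω : Type*} {mΩ : MeasurableSpace Ω} (P : Measure Ω) [IsProbabilityMeasure P]
    (Z G : MeasurableSpace Ω) (hZG : Z ≤ G) (hG : G ≤ mΩ)
    (α : ℝ) (hα : α ∈ Ioo (0 : ℝ) 1)
    (μ₀ : Ω → ℝ) (hμ₀m : Measurable[G] μ₀) (hμ₀i : Integrable μ₀ P)
    (η₀ : Ω → ℝ) (hη₀m : StronglyMeasurable[Z] η₀) (hη₀i : Integrable η₀ P)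
    (hatom : P {ω | μ₀ ω = η₀ ω} = 0)
    (h₀ : Ω → ℝ) (hh₀ : h₀ = fun ω => if η₀ ω < μ₀ ω then 1 else 0)
    (hquant : P[h₀ | Z] =ᵐ[P] fun _ => 1 - α) :
    IsGreatest
      {r : ℝ | ∃ h : Ω → ℝ, Measurable[G] h ∧ (∀ ω, h ω ∈ Icc (0 : ℝ) 1) ∧
        (P[h | Z] =ᵐ[P] fun _ => 1 - α) ∧
        r = (1 - α)⁻¹ * ∫ ω, h ω * μ₀ ω ∂P}
      ((1 - α)⁻¹ * ∫ ω, h₀ ω * μ₀ ω ∂P) ∧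
    (1 - α)⁻¹ * (∫ ω, h₀ ω * μ₀ ω ∂P) =
      ∫ ω, ((1 - α)⁻¹ * max (μ₀ ω - η₀ ω) 0 + η₀ ω) ∂P := by
  obtain ⟨hα0, hα1⟩ := hα
  have hca : (0:ℝ) < 1 - α := by linarith
  have hZ : Z ≤ mΩ := hZG.trans hG
  have hη₀G : Measurable[G] η₀ := hη₀m.measurable.mono hZG le_rfl
  have hsub : Integrable (fun ω => μ₀ ω - η₀ ω) P := hμ₀i.sub hη₀i
  -- boundedness helper
  have hbdd : ∀ g : Ω → ℝ, (∀ ω, g ω ∈ Icc (0:ℝ) 1) → ∃ C, ∀ x, ‖g x‖ ≤ C := by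
    intro g hg
    refine ⟨1, fun x => ?_⟩
    rw [Real.norm_eq_abs, abs_le]
    exact ⟨by linarith [(hg x).1], (hg x).2⟩
  -- integrability helpers
  have hint : ∀ g : Ω → ℝ, Measurable[G] g → (∀ ω, g ω ∈ Icc (0:ℝ) 1) →
      ∀ f : Ω → ℝ, Integrable f P → Integrable (fun ω => g ω * f ω) P := by
    intro g hgm hg01 f hf
    exact (hbdd g hg01).elim fun C hC => hf.bdd_mul ((hgm.mono hG le_rfl).aestronglyMeasurable) (Filter.Eventually.of_forall hC)
  have hintg : ∀ g : Ω → ℝ, Measurable[G] g → (∀ ω, g ω ∈ Icc (0:ℝ) 1) →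
      Integrable g P := by
    intro g hgm hg01
    have := hint g hgm hg01 (fun _ => (1:ℝ)) (integrable_const 1)
    simpa using this
  -- key: ∫ η₀ * g = (1-α) * ∫ η₀ for admissible g
  have key : ∀ g : Ω → ℝ, Measurable[G] g → (∀ ω, g ω ∈ Icc (0:ℝ) 1) →
      (P[g | Z] =ᵐ[P] fun _ => 1 - α) →
      ∫ ω, η₀ ω * g ω ∂P = (1 - α) * ∫ ω, η₀ ω ∂P := by
    intro g hgm hg01 hgc
    have hig : Integrable g P := hintg g hgm hg01
    have higη : Integrable (η₀ * g) P := by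
      have := hint g hgm hg01 η₀ hη₀i
      refine this.congr (Filter.Eventually.of_forall fun ω => ?_)
      simp [mul_comm]
    have hpull : P[η₀ * g | Z] =ᵐ[P] η₀ * P[g | Z] :=
      condExp_mul_of_stronglyMeasurable_left hη₀m higη hig
    have hae : P[η₀ * g | Z] =ᵐ[P] fun ω => η₀ ω * (1 - α) := by
      filter_upwards [hpull, hgc] with ω h1 h2
      simp [h1, h2]
    calc ∫ ω, η₀ ω * g ω ∂P = ∫ ω, (η₀ * g) ω ∂P := rfl
      _ = ∫ ω, (P[η₀ * g | Z]) ω ∂P := (integral_condExp hZ).symm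
      _ = ∫ ω, η₀ ω * (1 - α) ∂P := integral_congr_ae hae
      _ = (1 - α) * ∫ ω, η₀ ω ∂P := by
          rw [integral_mul_const, mul_comm]
  -- h₀ facts
  have hh₀m : Measurable[G] h₀ := by
    rw [hh₀]
    exact Measurable.ite (measurableSet_lt hη₀G hμ₀m) measurable_const measurable_const
  have hh₀01 : ∀ ω, h₀ ω ∈ Icc (0:ℝ) 1 := by
    intro ω; rw [hh₀]; dsimp only
    split <;> simp
  -- pointwise identity: h₀ ω * (μ₀ ω - η₀ ω) = max (μ₀ ω - η₀ ω) 0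
  have hptw : ∀ ω, h₀ ω * (μ₀ ω - η₀ ω) = max (μ₀ ω - η₀ ω) 0 := by
    intro ω; rw [hh₀]; dsimp only
    rcases lt_trichotomy (η₀ ω) (μ₀ ω) with h | h | h
    · rw [if_pos h, one_mul, max_eq_left (by linarith)]
    · rw [if_neg (by simp [h]), zero_mul, max_eq_right (by linarith)]
    · rw [if_neg (not_lt.2 h.le), zero_mul, max_eq_right (by linarith)]
  have hmaxi : Integrable (fun ω => max (μ₀ ω - η₀ ω) 0) P := by
    refine (hint h₀ hh₀m hh₀01 _ hsub).congr (Filter.Eventually.of_forall fun ω => hptw ω)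
  -- decomposition: ∫ g μ₀ = ∫ g (μ₀ - η₀) + ∫ η₀ g
  have hdecomp : ∀ g : Ω → ℝ, Measurable[G] g → (∀ ω, g ω ∈ Icc (0:ℝ) 1) →
      ∫ ω, g ω * μ₀ ω ∂P
        = ∫ ω, g ω * (μ₀ ω - η₀ ω) ∂P + ∫ ω, η₀ ω * g ω ∂P := by
    intro g hgm hg01
    rw [← integral_add (hint g hgm hg01 _ hsub)
      (((hint g hgm hg01 η₀ hη₀i).congr (Filter.Eventually.of_forall fun ω => by
        simp [mul_comm])))]
    apply integral_congr_ae
    filter_upwards with ω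
    ring
  refine ⟨⟨⟨h₀, hh₀m, hh₀01, hquant, rfl⟩, ?_⟩, ?_⟩
  · -- upper bound
    rintro r ⟨h, hhm, hh01, hhc, rfl⟩
    have hkey₁ := key h hhm hh01 hhc
    have hkey₂ := key h₀ hh₀m hh₀01 hquant
    have hmono : ∫ ω, h ω * (μ₀ ω - η₀ ω) ∂P ≤ ∫ ω, h₀ ω * (μ₀ ω - η₀ ω) ∂P := by
      apply integral_mono (hint h hhm hh01 _ hsub) (hint h₀ hh₀m hh₀01 _ hsub)
      intro ω
      dsimp only
      rw [hptw ω]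
      rcases le_or_gt (μ₀ ω) (η₀ ω) with hle | hlt
      · calc h ω * (μ₀ ω - η₀ ω) ≤ 0 :=
              mul_nonpos_of_nonneg_of_nonpos (hh01 ω).1 (by linarith)
          _ ≤ max (μ₀ ω - η₀ ω) 0 := le_max_right _ _
      · calc h ω * (μ₀ ω - η₀ ω) ≤ 1 * (μ₀ ω - η₀ ω) :=
              mul_le_mul_of_nonneg_right (hh01 ω).2 (by linarith)
          _ = μ₀ ω - η₀ ω := one_mul _
          _ ≤ max (μ₀ ω - η₀ ω) 0 := le_max_left _ _
    have hle : ∫ ω, h ω * μ₀ ω ∂P ≤ ∫ ω, h₀ ω * μ₀ ω ∂P := by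
      rw [hdecomp h hhm hh01, hdecomp h₀ hh₀m hh₀01, hkey₁, hkey₂]
      linarith
    exact mul_le_mul_of_nonneg_left hle (inv_nonneg.2 hca.le)
  · -- dual representation
    have hkey₂ := key h₀ hh₀m hh₀01 hquant
    have h1 : ∫ ω, h₀ ω * μ₀ ω ∂P
        = ∫ ω, max (μ₀ ω - η₀ ω) 0 ∂P + (1 - α) * ∫ ω, η₀ ω ∂P := by
      rw [hdecomp h₀ hh₀m hh₀01, hkey₂]
      congr 1
      exact integral_congr_ae (Filter.Eventually.of_forall fun ω => hptw ω)
    rw [h1, integral_add (hmaxi.const_mul _) hη₀i, integral_const_mul]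
    field_simp
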